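/- (Theorem 2 of the paper.) Consider the Max-plus linear train dynamics on a metro line of n segments indexed by j ∈ ℤ/nℤ: d^k_j = max( d^{k−b_j}_{j−1} + t_j, d^{k−(1−b_{j+1})}_{j+1} + s_{j+1} ) for all k ≥ 1, where b_j ∈ {0,1}, m = Σ_j b_j with 0 < m < n, the demand-dependent travel times are t_j = g_j·X_j + r̃_j > 0 with X_j ≥ 0, g_j > 0, r̃_j > 0, and the safe separation times satisfy s_j > 0. Then the average asymptotic growth rate lim_{k→∞} d^k_j / k exists, is the same for every j, and equals the average asymptotic train time-headway h(m,X) = max{ (Σ_j (g_j·X_j + r̃_j))/m , max_j (g_j·X_j + r̃_j + s_j) , (Σ_j s_j)/(n−m) }. -/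

import Mathlib

open Filter

lemma zmod_sum_range {n : ℕ} [NeZero n] {M : Type*} [AddCommMonoid M] (f : ZMod n → M) :
    ∑ i ∈ Finset.range n, f (i : ZMod n) = ∑ x : ZMod n, f x := by
  apply Finset.sum_nbij' (i := fun a => ((a : ℕ) : ZMod n)) (j := fun x => x.val)
  · intro a ha; exact Finset.mem_univ _
  · intro x hx; exact Finset.mem_range.mpr (ZMod.val_lt x)
  · intro a ha; exact ZMod.val_cast_of_lt (Finset.mem_range.mp ha)
  · intro x hx; exact ZMod.natCast_rightInverse x
  · intro a ha; rfl

set_option maxHeartbeats 4000000 in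
/-- Theorem 2 of the paper. For the Max-plus linear train dynamics
`d^k_j = max(d^{k−b_j}_{j−1} + t_j, d^{k−(1−b_{j+1})}_{j+1} + s_{j+1})` on `n`
segments (indexed by `ZMod n`), with `b j ∈ {0,1}`, `m = Σ_j b_j`, `0 < m < n`,
demand-dependent travel times `t_j = g_j·X_j + r̃_j > 0` (`X_j ≥ 0`, `g_j > 0`,
`r̃_j > 0`) and `s_j > 0`, the average asymptotic growth rate `lim_k d^k_j/k`
exists, is the same for every `j`, and equals the average asymptotic headway
`h(m,X) = max{ (Σ_j (g_j X_j + r̃_j))/m , max_j (g_j X_j + r̃_j + s_j) , (Σ_j s_j)/(n−m) }`. -/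
theorem stmt_9 (n : ℕ) [NeZero n]
    (b : ZMod n → ℕ) (hb : ∀ j, b j = 0 ∨ b j = 1)
    (m : ℕ) (hm : m = ∑ j, b j) (hm0 : 0 < m) (hmn : m < n)
    (X g rtil s : ZMod n → ℝ)
    (hX : ∀ j, 0 ≤ X j) (hg : ∀ j, 0 < g j)
    (hrtil : ∀ j, 0 < rtil j) (hs : ∀ j, 0 < s j)
    (d : ℕ → ZMod n → ℝ)
    (hdyn : ∀ k, 1 ≤ k → ∀ j,
      d k j = max
        (d (k - b j) (j - 1) + (g j * X j + rtil j))
        (d (k - (1 - b (j + 1))) (j + 1) + s (j + 1))) :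
    ∀ j, Tendsto (fun k : ℕ => d k j / k) atTop
      (nhds (max (max ((∑ i, (g i * X i + rtil i)) / m)
          (Finset.univ.sup' Finset.univ_nonempty (fun i => g i * X i + rtil i + s i)))
        ((∑ i, s i) / ((n : ℝ) - m)))) := by
  set t : ZMod n → ℝ := fun j => g j * X j + rtil j with ht_def
  set T : ℝ := ∑ i, t i with hT_def
  set S : ℝ := ∑ i, s i with hS_def
  set lam : ℝ := max (max (T / m) (Finset.univ.sup' Finset.univ_nonempty (fun i => t i + s i)))
    (S / ((n : ℝ) - m)) with hlam_def
  have hb1 : ∀ j, b j ≤ 1 := by intro j; rcases hb j with h | h <;> omega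
  have ht : ∀ j, 0 < t j := by
    intro j
    have := mul_nonneg (hg j).le (hX j)
    have := hrtil j
    simp only [ht_def]; linarith
  have hmR : 0 < (m : ℝ) := by exact_mod_cast hm0
  have hnmR : 0 < (n : ℝ) - m := by
    have : (m : ℝ) < n := by exact_mod_cast hmn
    linarith
  have hlam2 : ∀ j, t j + s j ≤ lam := by
    intro j
    have h1 : t j + s j ≤ Finset.univ.sup' Finset.univ_nonempty (fun i => t i + s i) :=
      Finset.le_sup' (fun i => t i + s i) (Finset.mem_univ j)
    calc t j + s j ≤ _ := h1
      _ ≤ _ := le_trans (le_max_right _ _) (le_max_left _ _)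
  have hlam_pos : 0 < lam := lt_of_lt_of_le (by have := ht 0; have := hs 0; linarith) (hlam2 0)
  have hlam1 : T ≤ lam * m := by
    have : T / m ≤ lam := le_trans (le_max_left _ _) (le_max_left _ _)
    calc T = T / m * m := by field_simp
      _ ≤ lam * m := by nlinarith
  have hlam3 : S ≤ lam * ((n : ℝ) - m) := by
    have : S / ((n : ℝ) - m) ≤ lam := le_max_right _ _
    calc S = S / ((n : ℝ) - m) * ((n : ℝ) - m) := by field_simp
      _ ≤ lam * ((n : ℝ) - m) := by nlinarith
  have hsumb : (∑ j, (b j : ℝ)) = m := by rw [hm]; push_cast; ring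
  have hsum1 : (∑ _j : ZMod n, (1 : ℝ)) = n := by simp [ZMod.card]
  -- the potential function v
  obtain ⟨v, hvA, hvB⟩ :
      ∃ v : ZMod n → ℝ,
        (∀ j, v (j - 1) + t j ≤ v j + lam * (b j : ℝ)) ∧
        (∀ j, v (j + 1) + s (j + 1) ≤ v j + lam * (1 - (b (j + 1) : ℝ))) := by
    set L : ZMod n → ℝ := fun x => t x - lam * (b x : ℝ) with hL_def
    set U : ZMod n → ℝ := fun x => lam * (1 - (b x : ℝ)) - s x with hU_def
    have hLU : ∀ x, L x ≤ U x := by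
      intro x
      have he : lam * (1 - (b x : ℝ)) + lam * (b x : ℝ) = lam := by ring
      have := hlam2 x
      simp only [hL_def, hU_def]
      linarith
    have hsum1mb : (∑ x : ZMod n, (1 - (b x : ℝ))) = (n : ℝ) - m := by
      rw [Finset.sum_sub_distrib, hsumb, hsum1]
    have hsumL : (∑ x, L x) = T - lam * m := by
      simp only [hL_def]
      rw [Finset.sum_sub_distrib, ← Finset.mul_sum, hsumb]
    have hsumU : (∑ x, U x) = lam * ((n : ℝ) - m) - S := by
      simp only [hU_def]
      rw [Finset.sum_sub_distrib, ← Finset.mul_sum, hsum1mb]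
    set DLU : ℝ := ∑ x, (U x - L x) with hDLU_def
    have hDeq : DLU = (lam * ((n : ℝ) - m) - S) - (T - lam * m) := by
      rw [hDLU_def, Finset.sum_sub_distrib, hsumU, hsumL]
    have hD0 : 0 ≤ DLU := Finset.sum_nonneg fun x _ => by linarith [hLU x]
    set th : ℝ := if DLU = 0 then 0 else (lam * m - T) / DLU with hth_def
    have hth0 : 0 ≤ th := by
      rw [hth_def]
      split_ifs with h
      · norm_num
      · have hDpos : 0 < DLU := lt_of_le_of_ne hD0 (Ne.symm h)
        apply div_nonneg (by linarith [hlam1]) hDpos.le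
    have hth1 : th ≤ 1 := by
      rw [hth_def]
      split_ifs with h
      · norm_num
      · have hDpos : 0 < DLU := lt_of_le_of_ne hD0 (Ne.symm h)
        rw [div_le_one hDpos]
        have := hlam3
        linarith [hDeq]
    set u : ZMod n → ℝ := fun x => L x + th * (U x - L x) with hu_def
    have huL : ∀ x, L x ≤ u x := by
      intro x
      have : 0 ≤ th * (U x - L x) := mul_nonneg hth0 (by linarith [hLU x])
      simp only [hu_def]; linarith
    have huU : ∀ x, u x ≤ U x := by
      intro x
      have h1 : 0 ≤ (1 - th) * (U x - L x) :=
        mul_nonneg (by linarith) (by linarith [hLU x])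
      simp only [hu_def]; nlinarith [hLU x]
    have husum : (∑ x, u x) = 0 := by
      have he : (∑ x, u x) = (∑ x, L x) + th * DLU := by
        simp only [hu_def, hDLU_def]
        rw [Finset.sum_add_distrib, Finset.mul_sum]
      rw [he, hsumL]
      rw [hth_def]
      split_ifs with h
      · have : lam * ((n : ℝ) - m) - S = T - lam * m := by
          have := hDeq; rw [h] at this; linarith
        have h1 := hlam1
        have h2 := hlam3
        linarith
      · rw [div_mul_cancel₀ _ h]; ring
    obtain ⟨v, hv⟩ : ∃ v : ZMod n → ℝ, ∀ x, v x - v (x - 1) = u x := by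
      refine ⟨fun x => ∑ i ∈ Finset.range x.val, u ((i : ZMod n) + 1), ?_⟩
      intro x
      show (∑ i ∈ Finset.range x.val, u ((i : ZMod n) + 1))
        - (∑ i ∈ Finset.range (x - 1).val, u ((i : ZMod n) + 1)) = u x
      by_cases hx : x = 0
      · subst hx
        simp only [ZMod.val_zero, Finset.range_zero, Finset.sum_empty]
        have hne1 : ((n - 1 : ℕ) : ZMod n) = -1 := by
          have h5 : (((n - 1 : ℕ) + 1 : ℕ) : ZMod n) = 0 := by
            rw [show (n - 1) + 1 = n by omega]; exact ZMod.natCast_self n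
          push_cast at h5
          exact eq_neg_of_add_eq_zero_left h5
        have hval : (0 - 1 : ZMod n).val = n - 1 := by
          rw [zero_sub, ← hne1, ZMod.val_cast_of_lt (by omega)]
        rw [hval]
        have h1 : (∑ i ∈ Finset.range n, u ((i : ZMod n) + 1)) = 0 := by
          rw [zmod_sum_range (fun x : ZMod n => u (x + 1))]
          rw [Fintype.sum_equiv (Equiv.addRight (1 : ZMod n)) (fun x => u (x + 1)) u
            (fun x => rfl)]
          exact husum
        have h2 : n = (n - 1) + 1 := by omega
        have h3 := Finset.sum_range_succ (fun i => u ((i : ZMod n) + 1)) (n - 1)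
        rw [← h2] at h3
        have h4 : ((n - 1 : ℕ) : ZMod n) + 1 = 0 := by
          have h5 : (((n - 1 : ℕ) + 1 : ℕ) : ZMod n) = 0 := by rw [← h2]; exact ZMod.natCast_self n
          push_cast at h5
          exact h5
        rw [h4] at h3
        rw [h3] at h1
        linarith
      · have hval1 : 1 ≤ x.val := by
          rcases Nat.eq_zero_or_pos x.val with h | h
          · exact absurd ((ZMod.val_eq_zero x).mp h) hx
          · exact h
        have hcastval : ((x.val : ℕ) : ZMod n) = x := ZMod.natCast_rightInverse x
        have hsub : x - 1 = ((x.val - 1 : ℕ) : ZMod n) := by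
          rw [Nat.cast_sub hval1, hcastval]
          norm_num
        have hvalsub : (x - 1).val = x.val - 1 := by
          rw [hsub, ZMod.val_cast_of_lt]
          have := ZMod.val_lt x; omega
        rw [hvalsub]
        have h4 := Finset.sum_range_succ (fun i => u ((i : ZMod n) + 1)) (x.val - 1)
        have h2 : (x.val - 1) + 1 = x.val := by omega
        rw [h2] at h4
        have h5 : ((x.val - 1 : ℕ) : ZMod n) + 1 = x := by
          rw [← hsub]
          exact sub_add_cancel x 1
        rw [h5] at h4
        rw [h4]
        ring
    refine ⟨v, ?_, ?_⟩
    · intro x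
      have h1 := hv x
      have h2 := huL x
      simp only [hL_def] at h2
      linarith
    · intro x
      have h1 := hv (x + 1)
      rw [add_sub_cancel_right] at h1
      have h2 := huU (x + 1)
      simp only [hU_def] at h2
      linarith
  -- topological order psi
  obtain ⟨psi, hpsi_bd, hpsiE1, hpsiE2⟩ :
      ∃ psi : ZMod n → ℤ,
        (∀ j, |psi j| < (n : ℤ) * n) ∧
        (∀ j, b j = 0 → psi (j - 1) < psi j) ∧
        (∀ j, b j = 1 → psi j < psi (j - 1)) := by
    -- find a transition point j0 with b j0 = 1, b (j0+1) = 0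
    obtain ⟨j0, hj01, hj02⟩ : ∃ j0 : ZMod n, b j0 = 1 ∧ b (j0 + 1) = 0 := by
      by_contra hcon
      push_neg at hcon
      obtain ⟨a, ha⟩ : ∃ a : ZMod n, b a = 1 := by
        by_contra h
        push_neg at h
        have hz : ∀ x : ZMod n, b x = 0 := fun x => (hb x).resolve_right (h x)
        have : m = 0 := by rw [hm]; exact Finset.sum_eq_zero fun x _ => hz x
        omega
      have hstep : ∀ i : ℕ, b (a + (i : ZMod n)) = 1 := by
        intro i
        induction i with
        | zero => simpa using ha
        | succ i ih =>
          have hne := hcon (a + (i : ZMod n)) ih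
          have h1 : b ((a + (i : ZMod n)) + 1) = 1 := (hb _).resolve_left hne
          have he : a + ((i + 1 : ℕ) : ZMod n) = (a + (i : ZMod n)) + 1 := by push_cast; ring
          rw [he]
          exact h1
      have hall : ∀ x : ZMod n, b x = 1 := by
        intro x
        have hx : x = a + (((x - a).val : ℕ) : ZMod n) := by
          rw [ZMod.natCast_rightInverse (x - a)]; ring
        rw [hx]
        exact hstep _
      have : m = n := by
        rw [hm, Finset.sum_congr rfl (fun x _ => hall x)]
        simp [ZMod.card]
      omega
    set c : ZMod n → ℤ := fun x => (m : ℤ) - n * b x with hc_def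
    have hcsum : (∑ x : ZMod n, c x) = 0 := by
      simp only [hc_def]
      rw [Finset.sum_sub_distrib, Finset.sum_const, ← Finset.mul_sum]
      have hbz : (∑ x : ZMod n, (b x : ℤ)) = (m : ℤ) := by rw [hm]; push_cast; ring
      rw [hbz]
      simp [ZMod.card]
      try ring
    have hcabs : ∀ x, |c x| ≤ (n : ℤ) := by
      intro x
      rcases hb x with h | h <;> rw [abs_le] <;> simp only [hc_def, h] <;> push_cast <;>
        constructor <;> omega
    have hcpos : ∀ x, b x = 0 → c x = (m : ℤ) := by
      intro x h; simp only [hc_def, h]; push_cast; ring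
    have hcneg : ∀ x, b x = 1 → c x = (m : ℤ) - n := by
      intro x h; simp only [hc_def, h]; push_cast; ring
    set psi : ZMod n → ℤ :=
      fun x => ∑ i ∈ Finset.range ((x - j0).val), c (j0 + (i : ZMod n) + 1) with hpsi_def
    have hP2 : psi j0 = 0 := by simp [hpsi_def]
    have hP1 : ∀ x, x ≠ j0 → psi x = psi (x - 1) + c x := by
      intro x hx
      have hne0 : x - j0 ≠ 0 := sub_ne_zero.mpr hx
      have hval1 : 1 ≤ (x - j0).val := by
        rcases Nat.eq_zero_or_pos (x - j0).val with h | h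
        · exact absurd ((ZMod.val_eq_zero _).mp h) hne0
        · exact h
      have hcastval : (((x - j0).val : ℕ) : ZMod n) = x - j0 := ZMod.natCast_rightInverse _
      have hsub : x - 1 - j0 = (((x - j0).val - 1 : ℕ) : ZMod n) := by
        rw [Nat.cast_sub hval1, hcastval]
        push_cast
        ring
      have hvalsub : (x - 1 - j0).val = (x - j0).val - 1 := by
        rw [hsub, ZMod.val_cast_of_lt]
        have := ZMod.val_lt (x - j0); omega
      have h4 := Finset.sum_range_succ (fun i => c (j0 + (i : ZMod n) + 1)) ((x - j0).val - 1)
      have h2 : ((x - j0).val - 1) + 1 = (x - j0).val := by omega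
      rw [h2] at h4
      have h5 : j0 + (((x - j0).val - 1 : ℕ) : ZMod n) + 1 = x := by
        rw [Nat.cast_sub hval1, hcastval]
        push_cast
        ring
      rw [h5] at h4
      simp only [hpsi_def, hvalsub]
      rw [h4]
    have hP3 : psi (j0 - 1) = (n : ℤ) - m := by
      have hne1 : ((n - 1 : ℕ) : ZMod n) = -1 := by
        have h5 : (((n - 1 : ℕ) + 1 : ℕ) : ZMod n) = 0 := by
          rw [show (n - 1) + 1 = n by omega]; exact ZMod.natCast_self n
        push_cast at h5
        exact eq_neg_of_add_eq_zero_left h5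
      have hval : (j0 - 1 - j0).val = n - 1 := by
        rw [show j0 - 1 - j0 = -1 by ring, ← hne1, ZMod.val_cast_of_lt (by omega)]
      have hfull : (∑ i ∈ Finset.range n, c (j0 + (i : ZMod n) + 1)) = 0 := by
        rw [zmod_sum_range (fun x : ZMod n => c (j0 + x + 1))]
        have heq : (∑ x : ZMod n, c (j0 + x + 1)) = ∑ x : ZMod n, c ((j0 + 1) + x) := by
          apply Finset.sum_congr rfl; intro x _; congr 1; ring
        rw [heq, Fintype.sum_equiv (Equiv.addLeft (j0 + 1)) (fun x => c ((j0 + 1) + x)) c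
          (fun x => rfl)]
        exact hcsum
      have h4 := Finset.sum_range_succ (fun i => c (j0 + (i : ZMod n) + 1)) (n - 1)
      rw [show (n - 1) + 1 = n by omega] at h4
      have h5 : j0 + ((n - 1 : ℕ) : ZMod n) + 1 = j0 := by rw [hne1]; ring
      rw [h5] at h4
      rw [h4] at hfull
      have hc0 : c j0 = (m : ℤ) - n := hcneg j0 hj01
      simp only [hpsi_def, hval]
      have : (∑ i ∈ Finset.range (n - 1), c (j0 + (i : ZMod n) + 1)) + c j0 = 0 := hfull
      rw [hc0] at this
      linarith
    refine ⟨psi, ?_, ?_, ?_⟩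
    · intro x
      have hlen : (x - j0).val ≤ n - 1 := by have := ZMod.val_lt (x - j0); omega
      calc |psi x| ≤ ∑ i ∈ Finset.range ((x - j0).val), |c (j0 + (i : ZMod n) + 1)| := by
            simp only [hpsi_def]; exact Finset.abs_sum_le_sum_abs _ _
        _ ≤ ∑ _i ∈ Finset.range ((x - j0).val), (n : ℤ) :=
            Finset.sum_le_sum fun i _ => hcabs _
        _ = ((x - j0).val : ℤ) * n := by rw [Finset.sum_const, Finset.card_range]; ring
        _ ≤ ((n : ℤ) - 1) * n := by
            have h1 : ((x - j0).val : ℤ) ≤ (n : ℤ) - 1 := by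
              have := ZMod.val_lt (x - j0); omega
            exact mul_le_mul_of_nonneg_right h1 (by positivity)
        _ < (n : ℤ) * n := by nlinarith [(by exact_mod_cast hm0.trans hmn : (0:ℤ) < n)]
    · intro x hx0
      have hxne : x ≠ j0 := fun h => by rw [h] at hx0; omega
      rw [hP1 x hxne, hcpos x hx0]
      have : (0 : ℤ) < m := by exact_mod_cast hm0
      linarith
    · intro x hx1
      by_cases hxj : x = j0
      · subst hxj
        rw [hP2, hP3]
        have : (m : ℤ) < n := by exact_mod_cast hmn
        linarith
      · rw [hP1 x hxj, hcneg x hx1]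
        have : (m : ℤ) < n := by exact_mod_cast hmn
        linarith
  -- upper bound
  obtain ⟨Cu, hCu⟩ : ∃ Cu : ℝ, ∀ k : ℕ, ∀ j, d k j ≤ v j + lam * k + Cu := by
    set N2 : ℕ := n * n with hN2_def
    have hN2cast : ((N2 : ℕ) : ℤ) = (n : ℤ) * n := by push_cast [hN2_def]; ring
    have hpsibd' : ∀ x, -(N2 : ℤ) < psi x ∧ psi x < (N2 : ℤ) := by
      intro x
      obtain ⟨h1, h2⟩ := abs_lt.mp (hpsi_bd x)
      rw [← hN2cast] at h1 h2
      exact ⟨by linarith, h2⟩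
    set nu : ZMod n → ℕ := fun x => (psi x + N2).toNat with hnu_def
    have hnu_lt : ∀ x, nu x < 2 * N2 := by
      intro x
      obtain ⟨h1, h2⟩ := hpsibd' x
      simp only [hnu_def]
      omega
    have hnu_mono : ∀ x y, psi x < psi y → nu x < nu y := by
      intro x y h
      obtain ⟨hx1, hx2⟩ := hpsibd' x
      obtain ⟨hy1, hy2⟩ := hpsibd' y
      simp only [hnu_def]
      omega
    set K : ℕ := 2 * N2 + 1 with hK_def
    set Cu : ℝ := Finset.univ.sup' Finset.univ_nonempty (fun i => d 0 i - v i) with hCu_def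
    have key : ∀ N : ℕ, ∀ k : ℕ, ∀ x : ZMod n, k * K + nu x ≤ N → d k x ≤ v x + lam * k + Cu := by
      intro N
      induction N using Nat.strong_induction_on with
      | _ N ih =>
        intro k x hN
        rcases Nat.eq_zero_or_pos k with hk0 | hk1
        · subst hk0
          have hle : d 0 x - v x ≤ Cu :=
            Finset.le_sup' (fun i => d 0 i - v i) (Finset.mem_univ x)
          simp only [Nat.cast_zero, mul_zero]
          linarith
        · rw [hdyn k hk1 x]
          have hbx := hb1 x
          have hbx1 := hb1 (x + 1)
          apply max_le
          · -- first term
            have hKK : (k - 1) * K + K = k * K := by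
              obtain ⟨k', rfl⟩ : ∃ k', k = k' + 1 := ⟨k - 1, by omega⟩
              simp [Nat.succ_mul]
            have hmeas : (k - b x) * K + nu (x - 1) < k * K + nu x := by
              rcases hb x with h0 | h1
              · have := hnu_mono (x - 1) x (hpsiE1 x h0)
                rw [h0]
                simp only [Nat.sub_zero]
                omega
              · have h2 := hnu_lt (x - 1)
                rw [h1]
                omega
            have hrec := ih ((k - b x) * K + nu (x - 1)) (lt_of_lt_of_le hmeas hN)
              (k - b x) (x - 1) le_rfl
            have hcast : ((k - b x : ℕ) : ℝ) = (k : ℝ) - (b x : ℝ) := by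
              have hbk : b x ≤ k := by omega
              exact Nat.cast_sub hbk
            rw [hcast] at hrec
            have hA := hvA x
            have he : lam * ((k : ℝ) - (b x : ℝ)) = lam * k - lam * (b x : ℝ) := by ring
            rw [he] at hrec
            have htx : g x * X x + rtil x = t x := by simp [ht_def]
            linarith
          · -- second term
            have hKK : (k - 1) * K + K = k * K := by
              obtain ⟨k', rfl⟩ : ∃ k', k = k' + 1 := ⟨k - 1, by omega⟩
              simp [Nat.succ_mul]
            have hmeas : (k - (1 - b (x + 1))) * K + nu (x + 1) < k * K + nu x := by
              rcases hb (x + 1) with h0 | h1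
              · have h2 := hnu_lt (x + 1)
                rw [h0]
                simp only [Nat.sub_zero]
                omega
              · have h3 := hpsiE2 (x + 1) h1
                rw [add_sub_cancel_right] at h3
                have := hnu_mono (x + 1) x h3
                rw [h1]
                simp only [Nat.sub_self, Nat.sub_zero]
                omega
            have hrec := ih ((k - (1 - b (x + 1))) * K + nu (x + 1)) (lt_of_lt_of_le hmeas hN)
              (k - (1 - b (x + 1))) (x + 1) le_rfl
            have hcast : ((k - (1 - b (x + 1)) : ℕ) : ℝ) = (k : ℝ) - (1 - (b (x + 1) : ℝ)) := by
              rcases hb (x + 1) with h0 | h1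
              · rw [h0]
                have h2 : ((k - 1 : ℕ) : ℝ) = (k : ℝ) - 1 := by
                  exact_mod_cast Nat.cast_sub hk1
                simpa using h2
              · rw [h1]
                norm_num
            rw [hcast] at hrec
            have hB := hvB x
            have he : lam * ((k : ℝ) - (1 - (b (x + 1) : ℝ)))
                = lam * k - lam * (1 - (b (x + 1) : ℝ)) := by ring
            rw [he] at hrec
            linarith
    exact ⟨Cu, fun k x => key (k * K + nu x) k x le_rfl⟩
  -- basic step inequalities
  have hS1 : ∀ k, 1 ≤ k → ∀ j, d (k - b j) (j - 1) + t j ≤ d k j := by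
    intro k hk j; rw [hdyn k hk j]; exact le_max_left _ _
  have hS2 : ∀ k, 1 ≤ k → ∀ j, d (k - (1 - b (j + 1))) (j + 1) + s (j + 1) ≤ d k j := by
    intro k hk j; rw [hdyn k hk j]; exact le_max_right _ _
  -- pair cycle
  have hpair : ∀ j, ∀ k, 2 ≤ k → d (k - 1) j + (t j + s j) ≤ d k j := by
    intro j k hk
    have h1 := hS1 k (by omega) j
    have h2 := hS2 (k - b j) (by have := hb1 j; omega) (j - 1)
    rw [sub_add_cancel] at h2
    have he : k - b j - (1 - b j) = k - 1 := by have := hb1 j; omega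
    rw [he] at h2
    linarith
  have hpairs : ∀ j, ∀ p k, 2 + p ≤ k → d (k - p) j + p * (t j + s j) ≤ d k j := by
    intro j p
    induction p with
    | zero => intro k hk; simp
    | succ p ih =>
      intro k hk
      have h1 := hpair j k (by omega)
      have h2 := ih (k - 1) (by omega)
      have he : k - 1 - p = k - (p + 1) := by omega
      rw [he] at h2
      push_cast
      push_cast at h2
      linarith
  -- forward chains
  have hBf_le : ∀ p, ∀ j : ZMod n, (∑ i ∈ Finset.range p, b (j - (i : ℕ))) ≤ p := by
    intro p j
    calc (∑ i ∈ Finset.range p, b (j - (i : ℕ)))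
        ≤ ∑ _i ∈ Finset.range p, 1 := Finset.sum_le_sum fun i _ => hb1 _
      _ = p := by simp
  have hC2 : ∀ p, ∀ k, ∀ j : ZMod n, p ≤ k →
      d (k - ∑ i ∈ Finset.range p, b (j - (i : ℕ))) (j - (p : ℕ))
        + (∑ i ∈ Finset.range p, t (j - (i : ℕ))) ≤ d k j := by
    intro p
    induction p with
    | zero => intro k j _; simp
    | succ p ih =>
      intro k j hk
      have h1 := hS1 k (by omega) j
      have h2 := ih (k - b j) (j - 1) (by have := hb1 j; omega)
      have hBs : (∑ i ∈ Finset.range (p + 1), b (j - (i : ℕ)))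
          = (∑ i ∈ Finset.range p, b ((j - 1) - (i : ℕ))) + b j := by
        rw [Finset.sum_range_succ']
        congr 1
        · apply Finset.sum_congr rfl; intro i _; congr 1; push_cast; ring
        · simp
      have hTs : (∑ i ∈ Finset.range (p + 1), t (j - (i : ℕ)))
          = (∑ i ∈ Finset.range p, t ((j - 1) - (i : ℕ))) + t j := by
        rw [Finset.sum_range_succ']
        congr 1
        · apply Finset.sum_congr rfl; intro i _; congr 1; push_cast; ring
        · simp
      have hidx : k - (∑ i ∈ Finset.range (p + 1), b (j - (i : ℕ)))
          = k - b j - (∑ i ∈ Finset.range p, b ((j - 1) - (i : ℕ))) := by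
        rw [hBs]
        have := hBf_le p (j - 1)
        have := hb1 j
        omega
      have hpos : j - ((p + 1 : ℕ) : ZMod n) = (j - 1) - (p : ℕ) := by push_cast; ring
      rw [hTs, hidx, hpos]
      linarith
  have hBfn : ∀ j : ZMod n, (∑ i ∈ Finset.range n, b (j - (i : ℕ))) = m := by
    intro j
    rw [zmod_sum_range (fun x : ZMod n => b (j - x))]
    rw [Fintype.sum_equiv (Equiv.subLeft j) (fun x => b (j - x)) b (fun x => rfl)]
    omega
  have hTfn : ∀ j : ZMod n, (∑ i ∈ Finset.range n, t (j - (i : ℕ))) = T := by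
    intro j
    rw [zmod_sum_range (fun x : ZMod n => t (j - x))]
    exact Fintype.sum_equiv (Equiv.subLeft j) (fun x => t (j - x)) t (fun x => rfl)
  -- forward loop
  have hL1 : ∀ q k, ∀ j, q * m + n ≤ k → d (k - q * m) j + q * T ≤ d k j := by
    intro q
    induction q with
    | zero => intro k j hk; simp
    | succ q ih =>
      intro k j hk
      have hsm : (q + 1) * m = q * m + m := by ring
      have h1 := hC2 n k j (by omega)
      rw [hBfn j, hTfn j] at h1
      have hj : j - ((n : ℕ) : ZMod n) = j := by simp
      rw [hj] at h1
      have h2 := ih (k - m) j (by omega)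
      have he : k - m - q * m = k - (q + 1) * m := by omega
      rw [he] at h2
      push_cast
      push_cast at h2
      linarith
  -- backward chains
  have hBb_le : ∀ p, ∀ j : ZMod n, (∑ i ∈ Finset.range p, (1 - b (j + (i : ℕ) + 1))) ≤ p := by
    intro p j
    calc (∑ i ∈ Finset.range p, (1 - b (j + (i : ℕ) + 1)))
        ≤ ∑ _i ∈ Finset.range p, 1 := Finset.sum_le_sum fun i _ => by omega
      _ = p := by simp
  have hC3 : ∀ p, ∀ k, ∀ j : ZMod n, p ≤ k →
      d (k - ∑ i ∈ Finset.range p, (1 - b (j + (i : ℕ) + 1))) (j + (p : ℕ))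
        + (∑ i ∈ Finset.range p, s (j + (i : ℕ) + 1)) ≤ d k j := by
    intro p
    induction p with
    | zero => intro k j _; simp
    | succ p ih =>
      intro k j hk
      have h1 := hS2 k (by omega) j
      have h2 := ih (k - (1 - b (j + 1))) (j + 1) (by have := hb1 (j + 1); omega)
      have hBs : (∑ i ∈ Finset.range (p + 1), (1 - b (j + (i : ℕ) + 1)))
          = (∑ i ∈ Finset.range p, (1 - b ((j + 1) + (i : ℕ) + 1))) + (1 - b (j + 1)) := by
        rw [Finset.sum_range_succ']
        congr 1
        · apply Finset.sum_congr rfl; intro i _; congr 2; push_cast; ring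
        · simp
      have hTs : (∑ i ∈ Finset.range (p + 1), s (j + (i : ℕ) + 1))
          = (∑ i ∈ Finset.range p, s ((j + 1) + (i : ℕ) + 1)) + s (j + 1) := by
        rw [Finset.sum_range_succ']
        congr 1
        · apply Finset.sum_congr rfl; intro i _; congr 1; push_cast; ring
        · simp
      have hidx : k - (∑ i ∈ Finset.range (p + 1), (1 - b (j + (i : ℕ) + 1)))
          = k - (1 - b (j + 1)) - (∑ i ∈ Finset.range p, (1 - b ((j + 1) + (i : ℕ) + 1))) := by
        rw [hBs]
        have := hBb_le p (j + 1)
        have := hb1 (j + 1)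
        omega
      have hpos : j + ((p + 1 : ℕ) : ZMod n) = (j + 1) + (p : ℕ) := by push_cast; ring
      rw [hTs, hidx, hpos]
      linarith
  have hBbn : ∀ j : ZMod n, (∑ i ∈ Finset.range n, (1 - b (j + (i : ℕ) + 1))) = n - m := by
    intro j
    rw [zmod_sum_range (fun x : ZMod n => 1 - b (j + x + 1))]
    have he : ∀ x : ZMod n, j + x + 1 = (j + 1) + x := by intro x; ring
    have : (∑ x : ZMod n, (1 - b (j + x + 1))) = ∑ x : ZMod n, (1 - b ((j + 1) + x)) := by
      apply Finset.sum_congr rfl; intro x _; rw [he x]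
    rw [this, Fintype.sum_equiv (Equiv.addLeft (j + 1)) (fun x => 1 - b ((j + 1) + x)) (fun x => 1 - b x) (fun x => rfl)]
    have hsplit : (∑ x : ZMod n, (1 - b x)) + (∑ x : ZMod n, b x) = ∑ _x : ZMod n, 1 := by
      rw [← Finset.sum_add_distrib]
      apply Finset.sum_congr rfl; intro x _; have := hb1 x; omega
    have hcard : (∑ _x : ZMod n, (1 : ℕ)) = n := by simp [ZMod.card]
    omega
  have hSbn : ∀ j : ZMod n, (∑ i ∈ Finset.range n, s (j + (i : ℕ) + 1)) = S := by
    intro j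
    rw [zmod_sum_range (fun x : ZMod n => s (j + x + 1))]
    have : (∑ x : ZMod n, s (j + x + 1)) = ∑ x : ZMod n, s ((j + 1) + x) := by
      apply Finset.sum_congr rfl; intro x _; congr 1; ring
    rw [this]
    exact Fintype.sum_equiv (Equiv.addLeft (j + 1)) (fun x => s ((j + 1) + x)) s (fun x => rfl)
  -- backward loop
  have hL2 : ∀ q k, ∀ j, q * (n - m) + n ≤ k → d (k - q * (n - m)) j + q * S ≤ d k j := by
    intro q
    induction q with
    | zero => intro k j hk; simp
    | succ q ih =>
      intro k j hk
      have hsm : (q + 1) * (n - m) = q * (n - m) + (n - m) := by ring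
      have h1 := hC3 n k j (by omega)
      rw [hBbn j, hSbn j] at h1
      have hj : j + ((n : ℕ) : ZMod n) = j := by simp
      rw [hj] at h1
      have h2 := ih (k - (n - m)) j (by omega)
      have he : k - (n - m) - q * (n - m) = k - (q + 1) * (n - m) := by omega
      rw [he] at h2
      push_cast
      push_cast at h2
      linarith
  -- forward transfer
  have hTrans : ∀ i j : ZMod n, ∀ k, n ≤ k → ∃ k', k - n ≤ k' ∧ k' ≤ k ∧ d k' i ≤ d k j := by
    intro i j k hk
    have hp : (j - i).val < n := ZMod.val_lt _
    have h := hC2 (j - i).val k j (by omega)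
    have hji : j - (((j - i).val : ℕ) : ZMod n) = i := by
      rw [ZMod.natCast_rightInverse (j - i)]
      exact sub_sub_cancel j i
    rw [hji] at h
    refine ⟨k - ∑ i' ∈ Finset.range (j - i).val, b (j - (i' : ℕ)), ?_, ?_, ?_⟩
    · have := hBf_le (j - i).val j; omega
    · omega
    · have hTpos : 0 ≤ ∑ i' ∈ Finset.range (j - i).val, t (j - (i' : ℕ)) :=
        Finset.sum_nonneg fun _ _ => (ht _).le
      linarith
  intro j
  -- lower bound
  obtain ⟨Cl, hCl⟩ : ∃ Cl : ℝ, ∀ k : ℕ, 2 * n + 2 ≤ k → lam * k - Cl ≤ d k j := by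
    have hrange : (Finset.range (2 * n + 2)).Nonempty := ⟨0, Finset.mem_range.mpr (by omega)⟩
    set Dlow : ℝ := (Finset.range (2 * n + 2)).inf' hrange (fun r => d r j) with hDlow_def
    have hcase := max_choice (max (T / (m : ℝ))
      (Finset.univ.sup' Finset.univ_nonempty (fun i => t i + s i))) (S / ((n : ℝ) - m))
    rw [← hlam_def] at hcase
    rcases hcase with hca | hc3
    · rcases (max_choice (T / (m : ℝ))
        (Finset.univ.sup' Finset.univ_nonempty (fun i => t i + s i))).imp
          (hca.trans) (hca.trans) with hc1 | hc2
      · -- case lam = T/m : forward loop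
        refine ⟨((n : ℝ) + m) * lam - Dlow, ?_⟩
        intro k hk
        set q := (k - n) / m with hq_def
        have hdm := Nat.div_add_mod (k - n) m
        have hmod := Nat.mod_lt (k - n) hm0
        have hqm : m * q = q * m := by ring
        rw [hqm] at hdm
        have hqk : q * m + n ≤ k := by omega
        have hL := hL1 q k j hqk
        have hrlt : k - q * m < 2 * n + 2 := by omega
        have hD : Dlow ≤ d (k - q * m) j :=
          Finset.inf'_le (fun r => d r j) (Finset.mem_range.mpr hrlt)
        have hkr : (k : ℝ) = (q : ℝ) * m + ((k - q * m : ℕ) : ℝ) := by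
          have : q * m + (k - q * m) = k := by omega
          exact_mod_cast (by omega : k = q * m + (k - q * m))
        have hrub : ((k - q * m : ℕ) : ℝ) ≤ (n : ℝ) + m := by
          have : k - q * m ≤ n + m := by omega
          exact_mod_cast this
        have hqT : lam * ((q : ℝ) * m) = q * T :=
          calc lam * ((q : ℝ) * m) = q * (T / m * m) := by rw [hc1]; ring
            _ = q * T := by rw [div_mul_cancel₀ _ (ne_of_gt hmR)]
        have hlk : lam * k = q * T + lam * ((k - q * m : ℕ) : ℝ) := by
          rw [hkr, mul_add, hqT]
        have hmul := mul_le_mul_of_nonneg_left hrub hlam_pos.le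
        linarith
      · -- case lam = max (t i + s i) : local pair cycle
        obtain ⟨i, -, hi⟩ := Finset.exists_mem_eq_sup' Finset.univ_nonempty (fun i => t i + s i)
        have hc2' : lam = t i + s i := by rw [hc2, hi]
        refine ⟨((n : ℝ) + 2) * lam - d 2 i, ?_⟩
        intro k hk
        obtain ⟨k', hk'1, hk'2, hk'3⟩ := hTrans i j k (by omega)
        have hk'lb : n + 2 ≤ k' := by omega
        have hp := hpairs i (k' - 2) k' (by omega)
        have he : k' - (k' - 2) = 2 := by omega
        rw [he] at hp
        have hcast : ((k' - 2 : ℕ) : ℝ) = (k' : ℝ) - 2 := by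
          have h2 : 2 ≤ k' := by omega
          rw [Nat.cast_sub h2]; norm_num
        have hk'real : (k : ℝ) - n ≤ (k' : ℝ) := by
          have := hk'1
          have hcast2 : ((k - n : ℕ) : ℝ) = (k : ℝ) - n :=
            Nat.cast_sub (by omega : n ≤ k)
          calc (k : ℝ) - n = ((k - n : ℕ) : ℝ) := hcast2.symm
            _ ≤ (k' : ℝ) := by exact_mod_cast hk'1
        rw [hcast, ← hc2'] at hp
        -- hp : d 2 i + ((k' : ℝ) - 2) * lam ≤ d k' i
        have hmul := mul_le_mul_of_nonneg_right
          (by linarith : (k : ℝ) - n - 2 ≤ (k' : ℝ) - 2) hlam_pos.le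
        linarith
    · -- case lam = S/(n-m) : backward loop
      refine ⟨(2 * (n : ℝ)) * lam - Dlow, ?_⟩
      intro k hk
      have hnm1 : 1 ≤ n - m := by omega
      set q := (k - n) / (n - m) with hq_def
      have hdm := Nat.div_add_mod (k - n) (n - m)
      have hmod := Nat.mod_lt (k - n) (by omega : 0 < n - m)
      have hqm : (n - m) * q = q * (n - m) := by ring
      rw [hqm] at hdm
      have hqk : q * (n - m) + n ≤ k := by omega
      have hL := hL2 q k j hqk
      have hrlt : k - q * (n - m) < 2 * n + 2 := by omega
      have hD : Dlow ≤ d (k - q * (n - m)) j :=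
        Finset.inf'_le (fun r => d r j) (Finset.mem_range.mpr hrlt)
      have hkr : (k : ℝ) = (q : ℝ) * ((n : ℝ) - m) + ((k - q * (n - m) : ℕ) : ℝ) := by
        have h1 : k = q * (n - m) + (k - q * (n - m)) := by omega
        have h2 : (((n - m : ℕ)) : ℝ) = (n : ℝ) - m := by
          exact_mod_cast Nat.cast_sub (by omega : m ≤ n)
        rw [← h2]
        exact_mod_cast h1
      have hrub : ((k - q * (n - m) : ℕ) : ℝ) ≤ 2 * (n : ℝ) := by
        have : k - q * (n - m) ≤ 2 * n := by omega
        exact_mod_cast this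
      have hqS : lam * ((q : ℝ) * ((n : ℝ) - m)) = q * S :=
        calc lam * ((q : ℝ) * ((n : ℝ) - m)) = q * (S / ((n : ℝ) - m) * ((n : ℝ) - m)) := by
              rw [hc3]; ring
          _ = q * S := by rw [div_mul_cancel₀ _ (ne_of_gt hnmR)]
      have hlk : lam * k = q * S + lam * ((k - q * (n - m) : ℕ) : ℝ) := by
        rw [hkr, mul_add, hqS]
      have hmul := mul_le_mul_of_nonneg_left hrub hlam_pos.le
      linarith
  -- conclusion
  have key : Tendsto (fun k : ℕ => d k j / k) atTop (nhds lam) := by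
    have h0 : Tendsto (fun k : ℕ => lam - Cl / k) atTop (nhds lam) := by
      have := tendsto_const_div_atTop_nhds_zero_nat Cl
      have h := Tendsto.sub (tendsto_const_nhds (x := lam)) this
      simpa using h
    have h1 : Tendsto (fun k : ℕ => lam + (v j + Cu) / k) atTop (nhds lam) := by
      have := tendsto_const_div_atTop_nhds_zero_nat (v j + Cu)
      have h := Tendsto.add (tendsto_const_nhds (x := lam)) this
      simpa using h
    apply tendsto_of_tendsto_of_tendsto_of_le_of_le' h0 h1
    · filter_upwards [eventually_ge_atTop (2 * n + 2)] with k hk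
      have hkpos : (0 : ℝ) < (k : ℝ) := by
        have : 0 < k := by omega
        exact_mod_cast this
      have h := hCl k hk
      rw [sub_le_iff_le_add]
      rw [← add_div, le_div_iff₀ hkpos]
      linarith
    · filter_upwards [eventually_ge_atTop 1] with k hk
      have hkpos : (0 : ℝ) < (k : ℝ) := by
        have : 0 < k := by omega
        exact_mod_cast this
      rw [div_le_iff₀ hkpos]
      have hx : (lam + (v j + Cu) / k) * k = lam * k + (v j + Cu) := by field_simp
      rw [hx]; linarith [hCu k j]
  exact key
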